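/- Let R be a commutative ring, let k ≥ 2, and let a,b,c,d ∈ R. Then one has the matrix identity (k−1) • (G_{k+1}(c,d)·F_k(a,b)) = k • (F_{k−1}(a,b)·G_k(c,d)) − F_{k−1}(c,d)·G_k(a,b). (This is the relation family (4) of Theorem 3.12 — the square relation (λ₁−λ₂)·g_{u_j}f^λ_{u_i} = (λ₁−λ₂+1)·f_{u_i}g^λ_{u_j} − f_{u_j}g^λ_{u_i} with k−1 = λ₁−λ₂ — verified for the explicit matrices representing the f-type and g-type maps, as used in the proof of Theorem 4.2.) -/

import Mathlib

set_option maxHeartbeats 1000000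

/-- The `(k+1) × k` matrix `F_k(a,b)` of equation (4.1): (1-indexed) entry `(i,j)` is
`a` if `i = j`, `b` if `i = j+1`, and `0` otherwise. -/
def Fmat (R : Type*) [CommRing R] (k : ℕ) (a b : R) : Matrix (Fin (k + 1)) (Fin k) R :=
  Matrix.of fun i j =>
    if (i : ℕ) = (j : ℕ) then a else if (i : ℕ) = (j : ℕ) + 1 then b else 0

/-- The `(k−1) × k` matrix `G_k(a,b)` of equation (4.2): (1-indexed) entry `(i,i)` is
`−(k−i)·b`, entry `(i,i+1)` is `i·a`, other entries are `0`. -/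
def Gmat (R : Type*) [CommRing R] (k : ℕ) (a b : R) : Matrix (Fin (k - 1)) (Fin k) R :=
  Matrix.of fun i j =>
    if (j : ℕ) = (i : ℕ) then -((k - 1 - (i : ℕ) : ℕ) : R) * b
    else if (j : ℕ) = (i : ℕ) + 1 then (((i : ℕ) + 1 : ℕ) : R) * a
    else 0

lemma sum_supp_two {R : Type*} [CommRing R] {m : ℕ} (t1 t2 : ℕ) (h12 : t1 ≠ t2) (f : ℕ → R)
    (hf : ∀ l, l ≠ t1 → l ≠ t2 → f l = 0) :
    ∑ l : Fin m, f ↑l = (if t1 < m then f t1 else 0) + (if t2 < m then f t2 else 0) := by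
  rw [Fin.sum_univ_eq_sum_range]
  have key : ∀ l, f l = (if l = t1 then f t1 else 0) + (if l = t2 then f t2 else 0) := by
    intro l
    by_cases h1 : l = t1
    · subst h1; rw [if_pos rfl, if_neg h12, add_zero]
    · by_cases h2 : l = t2
      · subst h2; rw [if_neg h1, if_pos rfl, zero_add]
      · rw [if_neg h1, if_neg h2, add_zero, hf l h1 h2]
  rw [Finset.sum_congr rfl fun l _ => key l, Finset.sum_add_distrib,
    Finset.sum_ite_eq' (Finset.range m), Finset.sum_ite_eq' (Finset.range m)]
  simp [Finset.mem_range]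

lemma sum_row {R : Type*} [CommRing R] (m i : ℕ) (A B : R) (g : ℕ → R) (him : i ≤ m) :
    ∑ x : Fin m, (if i = (x : ℕ) then A else if i = (x : ℕ) + 1 then B else 0) * g ↑x
      = (if i < m then A * g i else 0) + (if 1 ≤ i then B * g (i - 1) else 0) := by
  rcases Nat.eq_zero_or_pos i with h0 | hpos
  · subst h0
    rcases Nat.eq_zero_or_pos m with hm0 | hm
    · subst hm0; simp
    · rw [sum_supp_two 0 m (by omega)
        (fun l => (if 0 = l then A else if 0 = l + 1 then B else 0) * g l)
        (by intro l h1 h2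
            simp only [if_neg (Ne.symm h1), if_neg (by omega : ¬ (0 : ℕ) = l + 1),
              zero_mul])]
      simp [hm]
  · rw [sum_supp_two i (i - 1) (by omega)
      (fun l => (if i = l then A else if i = l + 1 then B else 0) * g l)
      (by intro l h1 h2
          simp only [if_neg (Ne.symm h1), if_neg (by omega : ¬ i = l + 1), zero_mul])]
    have h1 : i - 1 < m := by omega
    simp [h1, hpos, show ¬ i = i - 1 from by omega, show i - 1 + 1 = i from by omega]
    exact fun h => absurd h (by omega)

/-- Relation family (4) of Theorem 3.12 for the explicit matrices: for `k ≥ 2`,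
`(k−1) • (G_{k+1}(c,d)·F_k(a,b)) = k • (F_{k−1}(a,b)·G_k(c,d)) − F_{k−1}(c,d)·G_k(a,b)`
(the square relation with `k − 1 = λ₁ − λ₂`). -/
theorem stmt3 {R : Type*} [CommRing R] (k : ℕ) (hk : 2 ≤ k) (a b c d : R) :
    (k - 1) • ((Gmat R (k + 1) c d).submatrix (Fin.cast (by omega : k = k + 1 - 1)) id
        * Fmat R k a b) =
      (k • (Fmat R (k - 1) a b * Gmat R k c d)
          - Fmat R (k - 1) c d * Gmat R k a b).submatrix
        (Fin.cast (by omega : k = k - 1 + 1)) id := by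
  ext i j
  simp only [Matrix.smul_apply, Matrix.sub_apply, Matrix.submatrix_apply, Matrix.mul_apply,
    Fmat, Gmat, Matrix.of_apply, id, Fin.coe_cast]
  have hik : (i : ℕ) < k := i.isLt
  have hjk : (j : ℕ) < k := j.isLt
  obtain ⟨n, hn⟩ : ∃ n, k = ↑i + n + 1 := ⟨k - ↑i - 1, by omega⟩
  have S1 : (∑ x : Fin (k + 1),
        (if (x : ℕ) = ↑i then -((k + 1 - 1 - (i : ℕ) : ℕ) : R) * d
          else if (x : ℕ) = (i : ℕ) + 1 then (((i : ℕ) + 1 : ℕ) : R) * c else 0) *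
          (if (x : ℕ) = (j : ℕ) then a else if (x : ℕ) = (j : ℕ) + 1 then b else 0)) =
      (if (i : ℕ) < k + 1 then
        (-((k + 1 - 1 - (i : ℕ) : ℕ) : R) * d) *
          (if (i : ℕ) = (j : ℕ) then a else if (i : ℕ) = (j : ℕ) + 1 then b else 0) else 0) +
      (if (i : ℕ) + 1 < k + 1 then
        ((((i : ℕ) + 1 : ℕ) : R) * c) *
          (if (i : ℕ) + 1 = (j : ℕ) then a else if (i : ℕ) + 1 = (j : ℕ) + 1 then b else 0)
        else 0) := by
    refine sum_supp_two (↑i) (↑i + 1) (by omega)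
      (fun l => (if l = ↑i then -((k + 1 - 1 - (i : ℕ) : ℕ) : R) * d
          else if l = (i : ℕ) + 1 then (((i : ℕ) + 1 : ℕ) : R) * c else 0) *
          (if l = (j : ℕ) then a else if l = (j : ℕ) + 1 then b else 0)) ?_ |>.trans ?_
    · intro l h1 h2; simp only [if_neg h1, if_neg h2, zero_mul]
    · simp
  have S2 := sum_row (R := R) (k - 1) ↑i a b
    (fun l => if (j : ℕ) = l then -((k - 1 - l : ℕ) : R) * d
      else if (j : ℕ) = l + 1 then ((l + 1 : ℕ) : R) * c else 0) (by omega)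
  have S3 := sum_row (R := R) (k - 1) ↑i c d
    (fun l => if (j : ℕ) = l then -((k - 1 - l : ℕ) : R) * b
      else if (j : ℕ) = l + 1 then ((l + 1 : ℕ) : R) * a else 0) (by omega)
  rw [S1, S2, S3]
  have hkR : ((k : ℕ) : R) = (↑(i : ℕ) : R) + n + 1 := by
    exact_mod_cast congrArg (fun t : ℕ => (t : R)) hn
  have hk1R : ((k - 1 : ℕ) : R) = (↑(i : ℕ) : R) + n := by
    exact_mod_cast congrArg (fun t : ℕ => (t : R)) (show k - 1 = ↑i + n from by omega)
  simp only [nsmul_eq_mul]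
  split_ifs <;> try omega
  all_goals
    try simp only [show (k + 1 - 1 - (↑i : ℕ) : ℕ) = n + 1 from by omega]
  all_goals
    try simp only [show (k - 1 - (↑i : ℕ) : ℕ) = n from by omega]
  all_goals
    try simp only [show (k - 1 - ((↑i : ℕ) - 1) : ℕ) = n + 1 from by omega]
  all_goals
    try simp only [show ((↑i : ℕ) - 1 + 1 : ℕ) = (↑i : ℕ) from by omega]
  all_goals simp only [hkR, hk1R]
  all_goals push_cast
  all_goals
    try (have hi0' : (i : Fin k).val = 0 := by omega
         simp only [hi0', Nat.cast_zero])
  all_goals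
    try (have hn0 : n = 0 := by omega
         simp only [hn0, Nat.cast_zero])
  all_goals ring
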